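/- Let F be an α×2 matrix with entries f_{r1}, f_{r2} ∈ (0,1), p = (p_1,...,p_α) and q = (q_1, q_2) stochastic vectors with positive entries, and let χ > 0 be the unique positive solution of Σ_{r=1}^α p_r f_{r1}/(f_{r1} + f_{r2} χ) = q_1. Then sm_{p,q}(F) = q_1^{q_1} (q_2/χ)^{q_2} ∏_{r=1}^α (f_{r1} + f_{r2} χ)^{p_r}. -/

import Mathlib

open Finset

/-- The scaling mean of a nonnegative `α × β` matrix `F` with respect to the
stochastic vectors `p` and `q`. -/
noncomputable def scalingMean {α β : ℕ} (p : Fin α → ℝ) (q : Fin β → ℝ)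
    (F : Fin α → Fin β → ℝ) : ℝ :=
  sInf { v : ℝ | ∃ (x : Fin α → ℝ) (y : Fin β → ℝ),
    (∀ r, 0 < x r) ∧ (∀ s, 0 < y s) ∧
    v = (∏ r, x r ^ (-(p r))) * (∏ s, y s ^ (-(q s))) *
        (∑ r, ∑ s, x r * F r s * y s * p r * q s) }

/-- Halász–Székely formula for the scaling mean of an `α × 2` matrix. -/
theorem scalingMean_alpha_by_two {α : ℕ}
    (f : Fin α → Fin 2 → ℝ) (hf0 : ∀ r s, 0 < f r s) (hf1 : ∀ r s, f r s < 1)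
    (p : Fin α → ℝ) (hp : ∀ r, 0 < p r) (hp1 : ∑ r, p r = 1)
    (q : Fin 2 → ℝ) (hq : ∀ s, 0 < q s) (hq1 : ∑ s, q s = 1)
    (χ : ℝ) (hχ : 0 < χ)
    (hχeq : ∑ r, p r * f r 0 / (f r 0 + f r 1 * χ) = q 0) :
    scalingMean p q f
      = q 0 ^ (q 0) * (q 1 / χ) ^ (q 1) * ∏ r, (f r 0 + f r 1 * χ) ^ (p r) := by
  classical
  have hq0 := hq 0
  have hq1' := hq 1
  set g : Fin α → ℝ := fun r => f r 0 + f r 1 * χ with hgdef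
  have hg : ∀ r, 0 < g r := fun r => add_pos (hf0 r 0) (mul_pos (hf0 r 1) hχ)
  set V : ℝ := q 0 ^ (q 0) * (q 1 / χ) ^ (q 1) * ∏ r, g r ^ (p r) with hVdef
  have hq01 : q 0 + q 1 = 1 := by simpa [Fin.sum_univ_two] using hq1
  -- the second marginal equation
  have hχeq' : ∑ r, p r * (f r 1 * χ) / g r = q 1 := by
    have h : ∀ r : Fin α, p r * (f r 1 * χ) / g r = p r - p r * f r 0 / g r := by
      intro r
      have := (hg r).ne'
      field_simp
      ring
    rw [Finset.sum_congr rfl fun r _ => h r, Finset.sum_sub_distrib, hp1, hχeq]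
    linarith
  set S := { v : ℝ | ∃ (x : Fin α → ℝ) (y : Fin 2 → ℝ),
    (∀ r, 0 < x r) ∧ (∀ s, 0 < y s) ∧
    v = (∏ r, x r ^ (-(p r))) * (∏ s, y s ^ (-(q s))) *
        (∑ r, ∑ s, x r * f r s * y s * p r * q s) } with hSdef
  -- membership : the optimal scaling attains V
  have hmem : V ∈ S := by
    refine ⟨fun r => (g r)⁻¹, ![(q 0)⁻¹, χ / q 1],
      fun r => inv_pos.mpr (hg r),
      fun s => by fin_cases s <;> simp <;> positivity, ?_⟩
    have h1 : (∏ r, ((g r)⁻¹) ^ (-(p r))) = ∏ r, g r ^ (p r) := by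
      refine Finset.prod_congr rfl fun r _ => ?_
      rw [Real.rpow_neg (inv_nonneg.mpr (hg r).le), Real.inv_rpow (hg r).le, inv_inv]
    have h2 : (∏ s : Fin 2, (![(q 0)⁻¹, χ / q 1] s) ^ (-(q s)))
        = q 0 ^ (q 0) * (q 1 / χ) ^ (q 1) := by
      rw [Fin.prod_univ_two]
      simp only [Matrix.cons_val_zero, Matrix.cons_val_one, Matrix.head_cons]
      rw [Real.rpow_neg (inv_nonneg.mpr hq0.le), Real.inv_rpow hq0.le, inv_inv,
        show χ / q 1 = (q 1 / χ)⁻¹ by rw [inv_div],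
        Real.rpow_neg (inv_nonneg.mpr (by positivity)), Real.inv_rpow (by positivity), inv_inv]
    have h3 : (∑ r, ∑ s, (g r)⁻¹ * f r s * (![(q 0)⁻¹, χ / q 1] s) * p r * q s) = 1 := by
      rw [← hp1]
      refine Finset.sum_congr rfl fun r _ => ?_
      rw [Fin.sum_univ_two]
      simp only [Matrix.cons_val_zero, Matrix.cons_val_one, Matrix.head_cons]
      have := (hg r).ne'
      have := hq0.ne'
      have := hq1'.ne'
      field_simp
      ring
    rw [h1, h2, h3, mul_one, hVdef]
    ring
  -- lower bound : V ≤ every element of S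
  have hlb : ∀ v ∈ S, V ≤ v := by
    rintro v ⟨x, y, hx, hy, rfl⟩
    set m : Fin 2 → ℝ := ![1, χ] with hmdef
    have hm : ∀ s, 0 < m s := fun s => by fin_cases s <;> simp [hmdef, hχ]
    set w : Fin α × Fin 2 → ℝ := fun rs => p rs.1 * (f rs.1 rs.2 * m rs.2 / g rs.1) with hwdef
    set z : Fin α × Fin 2 → ℝ := fun rs => (x rs.1 * g rs.1) * (y rs.2 * q rs.2 / m rs.2)
      with hzdef
    have hw : ∀ rs : Fin α × Fin 2, 0 < w rs := fun rs => by
      have := hp rs.1; have := hf0 rs.1 rs.2; have := hm rs.2; have := hg rs.1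
      simp only [hwdef]; positivity
    have hz : ∀ rs : Fin α × Fin 2, 0 < z rs := fun rs => by
      have := hx rs.1; have := hy rs.2; have := hq rs.2; have := hm rs.2; have := hg rs.1
      simp only [hzdef]; positivity
    have hwp : ∀ r, w (r, 0) + w (r, 1) = p r := by
      intro r
      simp only [hwdef, hmdef, Matrix.cons_val_zero, Matrix.cons_val_one, Matrix.head_cons]
      have := (hg r).ne'
      field_simp
      ring
    have hw1 : ∑ rs : Fin α × Fin 2, w rs = 1 := by
      rw [Fintype.sum_prod_type, ← hp1]
      refine Finset.sum_congr rfl fun r _ => ?_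
      rw [Fin.sum_univ_two, hwp r]
    have hwz : ∀ rs : Fin α × Fin 2, w rs * z rs
        = x rs.1 * f rs.1 rs.2 * y rs.2 * p rs.1 * q rs.2 := fun rs => by
      have h1 := (hg rs.1).ne'
      have h2 := (hm rs.2).ne'
      simp only [hwdef, hzdef]
      field_simp
    have hsum : (∑ r, ∑ s, x r * f r s * y s * p r * q s)
        = ∑ rs : Fin α × Fin 2, w rs * z rs := by
      rw [Fintype.sum_prod_type]
      exact Finset.sum_congr rfl fun r _ => Finset.sum_congr rfl fun s _ => (hwz (r, s)).symm
    have hAMGM := Real.geom_mean_le_arith_mean_weighted Finset.univ w z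
      (fun rs _ => (hw rs).le) hw1 (fun rs _ => (hz rs).le)
    -- the marginal sums of the weights
    have hw0sum : ∑ r, w (r, 0) = q 0 := by
      rw [← hχeq]
      refine Finset.sum_congr rfl fun r _ => ?_
      simp only [hwdef, hmdef, Matrix.cons_val_zero]
      ring
    have hw1sum : ∑ r, w (r, 1) = q 1 := by
      rw [← hχeq']
      refine Finset.sum_congr rfl fun r _ => ?_
      simp only [hwdef, hmdef, Matrix.cons_val_one, Matrix.head_cons, Matrix.cons_val_zero]
      ring
    -- compute the geometric mean
    have hP : (∏ rs : Fin α × Fin 2, z rs ^ w rs)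
        = (∏ r, (x r * g r) ^ (p r)) * ((y 0 * q 0) ^ (q 0) * (y 1 * q 1 / χ) ^ (q 1)) := by
      have hsplit : ∀ rs : Fin α × Fin 2, z rs ^ w rs
          = (x rs.1 * g rs.1) ^ w rs * (y rs.2 * q rs.2 / m rs.2) ^ w rs := fun rs => by
        have := hx rs.1; have := hy rs.2; have := hq rs.2; have := hm rs.2; have := hg rs.1
        simp only [hzdef]
        exact Real.mul_rpow (by positivity) (by positivity)
      rw [Finset.prod_congr rfl fun rs _ => hsplit rs, Finset.prod_mul_distrib]
      have first : (∏ rs : Fin α × Fin 2, (x rs.1 * g rs.1) ^ w rs)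
          = ∏ r, (x r * g r) ^ (p r) := by
        rw [Fintype.prod_prod_type]
        refine Finset.prod_congr rfl fun r _ => ?_
        rw [Fin.prod_univ_two, ← Real.rpow_add (mul_pos (hx r) (hg r)), hwp r]
      have second : (∏ rs : Fin α × Fin 2, (y rs.2 * q rs.2 / m rs.2) ^ w rs)
          = (y 0 * q 0) ^ (q 0) * (y 1 * q 1 / χ) ^ (q 1) := by
        have ht : ∀ s : Fin 2, 0 < y s * q s / m s := fun s => by
          have := hy s; have := hq s; have := hm s; positivity
        rw [Fintype.prod_prod_type_right, Fin.prod_univ_two,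
          ← Real.rpow_sum_of_pos (ht 0) (fun r => w (r, 0)) Finset.univ,
          ← Real.rpow_sum_of_pos (ht 1) (fun r => w (r, 1)) Finset.univ,
          hw0sum, hw1sum]
        simp [hmdef]
      rw [first, second]
    -- assemble
    have hApos : 0 < (∏ r, x r ^ (-(p r))) * (∏ s, y s ^ (-(q s))) :=
      mul_pos (Finset.prod_pos fun r _ => Real.rpow_pos_of_pos (hx r) _)
        (Finset.prod_pos fun s _ => Real.rpow_pos_of_pos (hy s) _)
    have e1 : (∏ r, x r ^ (-(p r))) * (∏ r, (x r * g r) ^ (p r)) = ∏ r, g r ^ (p r) := by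
      rw [← Finset.prod_mul_distrib]
      refine Finset.prod_congr rfl fun r _ => ?_
      rw [Real.mul_rpow (hx r).le (hg r).le, ← mul_assoc, ← Real.rpow_add (hx r),
        neg_add_cancel, Real.rpow_zero, one_mul]
    have e2 : y 0 ^ (-(q 0)) * (y 0 * q 0) ^ (q 0) = q 0 ^ (q 0) := by
      rw [Real.mul_rpow (hy 0).le hq0.le, ← mul_assoc, ← Real.rpow_add (hy 0),
        neg_add_cancel, Real.rpow_zero, one_mul]
    have e3 : y 1 ^ (-(q 1)) * (y 1 * q 1 / χ) ^ (q 1) = (q 1 / χ) ^ (q 1) := by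
      rw [show y 1 * q 1 / χ = y 1 * (q 1 / χ) by ring,
        Real.mul_rpow (hy 1).le (by positivity), ← mul_assoc, ← Real.rpow_add (hy 1),
        neg_add_cancel, Real.rpow_zero, one_mul]
    have hkey : ((∏ r, x r ^ (-(p r))) * (∏ s, y s ^ (-(q s))))
        * (∏ rs : Fin α × Fin 2, z rs ^ w rs) = V := by
      rw [hP, Fin.prod_univ_two (f := fun s => y s ^ (-(q s)))]
      calc (∏ r, x r ^ (-(p r))) * (y 0 ^ (-(q 0)) * y 1 ^ (-(q 1)))
            * ((∏ r, (x r * g r) ^ (p r)) * ((y 0 * q 0) ^ (q 0) * (y 1 * q 1 / χ) ^ (q 1)))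
          = ((∏ r, x r ^ (-(p r))) * (∏ r, (x r * g r) ^ (p r)))
            * ((y 0 ^ (-(q 0)) * (y 0 * q 0) ^ (q 0))
              * (y 1 ^ (-(q 1)) * (y 1 * q 1 / χ) ^ (q 1))) := by ring
        _ = (∏ r, g r ^ (p r)) * (q 0 ^ (q 0) * (q 1 / χ) ^ (q 1)) := by rw [e1, e2, e3]
        _ = V := by rw [hVdef]; ring
    rw [hsum]
    calc V = ((∏ r, x r ^ (-(p r))) * (∏ s, y s ^ (-(q s))))
          * (∏ rs : Fin α × Fin 2, z rs ^ w rs) := hkey.symm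
      _ ≤ ((∏ r, x r ^ (-(p r))) * (∏ s, y s ^ (-(q s))))
          * (∑ rs : Fin α × Fin 2, w rs * z rs) :=
        mul_le_mul_of_nonneg_left hAMGM hApos.le
  have hne : S.Nonempty := ⟨V, hmem⟩
  have hbdd : BddBelow S := ⟨V, hlb⟩
  rw [scalingMean]
  exact le_antisymm (csInf_le hbdd hmem) (le_csInf hne hlb)
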